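/- For a Lie group analogue in any category with T, p, 0 (0 ≫ p = id): taking the pregroupoid to be a group object G (with A = B = terminal object, α = β the unique map, and μ(x,y,z) = x y^{-1} z), the splitting theorem specializes to an isomorphism T G ≅ G × T_e G, where T_e G is the pullback of p : TG → G along the unit e : 1 → G. -/

import Mathlib

open CategoryTheory CategoryTheory.Limits

/-- For a group object `G` in a category `𝕏` with an endofunctor `T`,
`p : T ⟹ 𝟭`, `0 : 𝟭 ⟹ T`, `0 ≫ p = 𝟙`, where `T` preserves the relevant pullbacks and
the terminal object, the splitting theorem specializes to `T G ≅ G × T_e G`, where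
`T_e G` is the pullback of `p : TG ⟶ G` along the unit `e : ⊤ ⟶ G`. -/
theorem stmt17 {C : Type*} [Category C] [HasTerminal C] [HasBinaryProducts C]
    (T : C ⥤ C) (p : T ⟶ 𝟭 C) (z : 𝟭 C ⟶ T) (hz : z ≫ p = 𝟙 (𝟭 C))
    -- T preserves pullbacks and the terminal object
    (hTpb : ∀ {P Y Z W : C} (f1 : P ⟶ Y) (f2 : P ⟶ Z) (g1 : Y ⟶ W) (g2 : Z ⟶ W),
      IsPullback f1 f2 g1 g2 → IsPullback (T.map f1) (T.map f2) (T.map g1) (T.map g2))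
    (hTterm : IsTerminal (T.obj (⊤_ C)))
    -- a group object G in C
    (G : C) (m : G ⨯ G ⟶ G) (e : ⊤_ C ⟶ G) (i : G ⟶ G)
    (hassoc : prod.map m (𝟙 G) ≫ m = (prod.associator G G G).hom ≫ prod.map (𝟙 G) m ≫ m)
    (hunitL : prod.lift (terminal.from G ≫ e) (𝟙 G) ≫ m = 𝟙 G)
    (hunitR : prod.lift (𝟙 G) (terminal.from G ≫ e) ≫ m = 𝟙 G)
    (hinvL : prod.lift i (𝟙 G) ≫ m = terminal.from G ≫ e)
    (hinvR : prod.lift (𝟙 G) i ≫ m = terminal.from G ≫ e)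
    -- T_e G = the pullback of p : TG ⟶ G along e
    (TeG : C) (ιe : TeG ⟶ T.obj G) (πe : TeG ⟶ ⊤_ C)
    (hTe : IsPullback ιe πe (p.app G) e) :
    Nonempty (T.obj G ≅ G ⨯ TeG) := by
  -- cleanly-typed components of p and z and their naturality properties
  obtain ⟨p', hp'⟩ : ∃ q : T.obj G ⟶ G, q = p.app G := ⟨_, rfl⟩
  obtain ⟨z', hz'⟩ : ∃ q : G ⟶ T.obj G, q = z.app G := ⟨_, rfl⟩
  rw [← hp'] at hTe
  have hzp : z' ≫ p' = 𝟙 G := by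
    rw [hz', hp']; exact congrArg (fun t => t.app G) hz
  have hnpf : T.map (prod.fst : G ⨯ G ⟶ G) ≫ p' = p.app (G ⨯ G) ≫ prod.fst := by
    rw [hp']; exact p.naturality prod.fst
  have hnps : T.map (prod.snd : G ⨯ G ⟶ G) ≫ p' = p.app (G ⨯ G) ≫ prod.snd := by
    rw [hp']; exact p.naturality prod.snd
  have hnpm : T.map m ≫ p' = p.app (G ⨯ G) ≫ m := by
    rw [hp']; exact p.naturality m
  have hnzf : (prod.fst : G ⨯ G ⟶ G) ≫ z' = z.app (G ⨯ G) ≫ T.map prod.fst := by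
    rw [hz']; exact z.naturality prod.fst
  have hnzs : (prod.snd : G ⨯ G ⟶ G) ≫ z' = z.app (G ⨯ G) ≫ T.map prod.snd := by
    rw [hz']; exact z.naturality prod.snd
  have hnzm : m ≫ z' = z.app (G ⨯ G) ≫ T.map m := by
    rw [hz']; exact z.naturality m
  have hnze : e ≫ z' = z.app (⊤_ C) ≫ T.map e := by
    rw [hz']; exact z.naturality e
  -- T preserves the product pullbacks
  have Q : IsPullback (T.map (prod.fst : G ⨯ G ⟶ G)) (T.map prod.snd)
      (T.map (terminalIsTerminal.from G)) (T.map (terminalIsTerminal.from G)) :=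
    hTpb _ _ _ _ (IsPullback.of_is_product' (prodIsProd G G) terminalIsTerminal)
  have Q2 : IsPullback (T.map (prod.fst : (G ⨯ G) ⨯ G ⟶ G ⨯ G)) (T.map prod.snd)
      (T.map (terminalIsTerminal.from (G ⨯ G))) (T.map (terminalIsTerminal.from G)) :=
    hTpb _ _ _ _ (IsPullback.of_is_product' (prodIsProd (G ⨯ G) G) terminalIsTerminal)
  obtain ⟨h, hh1, hh2⟩ : ∃ h : T.obj G ⨯ T.obj G ⟶ T.obj (G ⨯ G),
      h ≫ T.map prod.fst = prod.fst ∧ h ≫ T.map prod.snd = prod.snd :=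
    ⟨Q.lift prod.fst prod.snd (hTterm.hom_ext _ _), Q.lift_fst .., Q.lift_snd ..⟩
  -- p is multiplicative
  have hpmul : ∀ {X : C} (a b : X ⟶ T.obj G),
      prod.lift a b ≫ h ≫ T.map m ≫ p' = prod.lift (a ≫ p') (b ≫ p') ≫ m := by
    intro X a b
    have hpp : h ≫ p.app (G ⨯ G) = prod.lift (prod.fst ≫ p') (prod.snd ≫ p') := by
      apply Limits.prod.hom_ext
      · rw [Category.assoc, prod.lift_fst, ← hnpf, reassoc_of% hh1]
      · rw [Category.assoc, prod.lift_snd, ← hnps, reassoc_of% hh2]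
    rw [hnpm, reassoc_of% hpp, prod.comp_lift_assoc, prod.lift_fst_assoc,
      prod.lift_snd_assoc]
  -- z is multiplicative
  have hzmul : ∀ {X : C} (a b : X ⟶ G),
      prod.lift (a ≫ z') (b ≫ z') ≫ h ≫ T.map m = prod.lift a b ≫ m ≫ z' := by
    intro X a b
    have hzz : prod.lift (prod.fst ≫ z') (prod.snd ≫ z') ≫ h = z.app (G ⨯ G) := by
      apply Q.hom_ext
      · rw [Category.assoc, hh1, prod.lift_fst, hnzf]
      · rw [Category.assoc, hh2, prod.lift_snd, hnzs]
    have key : prod.lift (a ≫ z') (b ≫ z') =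
        prod.lift a b ≫ prod.lift (prod.fst ≫ z') (prod.snd ≫ z') := by
      rw [prod.comp_lift, prod.lift_fst_assoc, prod.lift_snd_assoc]
    rw [key, Category.assoc, reassoc_of% hzz, ← hnzm]
  -- left unit law on TG
  have hunitTL : ∀ {X : C} (w : X ⟶ ⊤_ C) (a : X ⟶ T.obj G),
      prod.lift (w ≫ e ≫ z') a ≫ h ≫ T.map m = a := by
    intro X w a
    have h1 : prod.lift (w ≫ e ≫ z') a ≫ h =
        a ≫ T.map (prod.lift (terminal.from G ≫ e) (𝟙 G)) := by
      apply Q.hom_ext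
      · rw [Category.assoc, Category.assoc, hh1, prod.lift_fst, ← T.map_comp,
          prod.lift_fst, T.map_comp, hnze, ← Category.assoc, ← Category.assoc]
        congr 1
        exact hTterm.hom_ext _ _
      · rw [Category.assoc, Category.assoc, hh2, prod.lift_snd, ← T.map_comp,
          prod.lift_snd, T.map_id, Category.comp_id]
    rw [reassoc_of% h1, ← T.map_comp, hunitL, T.map_id, Category.comp_id]
  -- associativity on TG
  have hassocT : ∀ {X : C} (a b c : X ⟶ T.obj G),
      prod.lift a (prod.lift b c ≫ h ≫ T.map m) ≫ h ≫ T.map m =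
        prod.lift (prod.lift a b ≫ h ≫ T.map m) c ≫ h ≫ T.map m := by
    intro X a b c
    obtain ⟨t, ht1, ht2⟩ : ∃ t : X ⟶ T.obj ((G ⨯ G) ⨯ G),
        t ≫ T.map prod.fst = prod.lift a b ≫ h ∧ t ≫ T.map prod.snd = c :=
      ⟨Q2.lift (prod.lift a b ≫ h) c (hTterm.hom_ext _ _), Q2.lift_fst .., Q2.lift_snd ..⟩
    have e1 : t ≫ T.map (prod.map m (𝟙 G)) =
        prod.lift (prod.lift a b ≫ h ≫ T.map m) c ≫ h := by
      apply Q.hom_ext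
      · rw [Category.assoc, Category.assoc, hh1, prod.lift_fst, ← T.map_comp,
          prod.map_fst, T.map_comp, reassoc_of% ht1]
      · rw [Category.assoc, Category.assoc, hh2, prod.lift_snd, ← T.map_comp,
          prod.map_snd, T.map_comp, T.map_id, reassoc_of% ht2, Category.comp_id]
    have e2 : t ≫ T.map (prod.lift (prod.fst ≫ prod.snd) (prod.snd : (G ⨯ G) ⨯ G ⟶ G)) =
        prod.lift b c ≫ h := by
      apply Q.hom_ext
      · rw [Category.assoc, Category.assoc, hh1, prod.lift_fst, ← T.map_comp,
          prod.lift_fst, T.map_comp, reassoc_of% ht1, hh2, prod.lift_snd]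
      · rw [Category.assoc, Category.assoc, hh2, prod.lift_snd, ← T.map_comp,
          prod.lift_snd, ht2]
    have e3 : t ≫ T.map ((prod.associator G G G).hom ≫ prod.map (𝟙 G) m) =
        prod.lift a (prod.lift b c ≫ h ≫ T.map m) ≫ h := by
      apply Q.hom_ext
      · rw [Category.assoc, Category.assoc, hh1, prod.lift_fst, ← T.map_comp]
        have hw : (prod.associator G G G).hom ≫ prod.map (𝟙 G) m ≫ prod.fst =
            (prod.fst : (G ⨯ G) ⨯ G ⟶ G ⨯ G) ≫ prod.fst := by simp; exact prod.lift_fst _ _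
        rw [Category.assoc, hw, T.map_comp, reassoc_of% ht1, hh1, prod.lift_fst]
      · rw [Category.assoc, Category.assoc, hh2, prod.lift_snd, ← T.map_comp]
        have hw : (prod.associator G G G).hom ≫ prod.map (𝟙 G) m ≫ prod.snd =
            prod.lift (prod.fst ≫ prod.snd) (prod.snd : (G ⨯ G) ⨯ G ⟶ G) ≫ m := by simp; exact prod.lift_snd_assoc _ _ _
        rw [Category.assoc, hw, T.map_comp, reassoc_of% e2]
    calc prod.lift a (prod.lift b c ≫ h ≫ T.map m) ≫ h ≫ T.map m
        = t ≫ T.map ((prod.associator G G G).hom ≫ prod.map (𝟙 G) m) ≫ T.map m := by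
          rw [reassoc_of% e3]
      _ = t ≫ T.map (prod.map m (𝟙 G)) ≫ T.map m := by
          rw [← T.map_comp, ← T.map_comp, Category.assoc, ← hassoc]
      _ = prod.lift (prod.lift a b ≫ h ≫ T.map m) c ≫ h ≫ T.map m := by
          rw [reassoc_of% e1]
  -- the map q(ξ) = z(i(p ξ)) · ξ and the induced section s : TG ⟶ TeG
  have hq : (prod.lift (p' ≫ i ≫ z') (𝟙 (T.obj G)) ≫ h ≫ T.map m) ≫ p' =
      (p' ≫ terminal.from G) ≫ e := by
    rw [Category.assoc, Category.assoc, hpmul, Category.assoc, Category.assoc, hzp,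
      Category.comp_id, Category.id_comp]
    calc prod.lift (p' ≫ i) p' ≫ m = p' ≫ prod.lift i (𝟙 G) ≫ m := by
          rw [prod.comp_lift_assoc, Category.comp_id]
      _ = (p' ≫ terminal.from G) ≫ e := by rw [hinvL, Category.assoc]
  obtain ⟨s, hs1, _⟩ : ∃ s : T.obj G ⟶ TeG,
      s ≫ ιe = prod.lift (p' ≫ i ≫ z') (𝟙 (T.obj G)) ≫ h ≫ T.map m ∧
      s ≫ πe = p' ≫ terminal.from G :=
    ⟨hTe.lift _ _ hq, hTe.lift_fst .., hTe.lift_snd ..⟩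
  -- the two maps of the isomorphism
  obtain ⟨ψ, hψ⟩ : ∃ ψ : G ⨯ TeG ⟶ T.obj G,
      ψ = prod.lift (prod.fst ≫ z') (prod.snd ≫ ιe) ≫ h ≫ T.map m := ⟨_, rfl⟩
  have hψp : ψ ≫ p' = prod.fst := by
    rw [hψ]
    simp only [Category.assoc]
    rw [hpmul]
    simp only [Category.assoc]
    rw [hzp, hTe.w, Category.comp_id]
    have hterm : (prod.snd : G ⨯ TeG ⟶ TeG) ≫ πe = prod.fst ≫ terminal.from G :=
      terminalIsTerminal.hom_ext _ _
    rw [← Category.assoc prod.snd πe e, hterm, Category.assoc]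
    rw [show prod.lift (prod.fst : G ⨯ TeG ⟶ G) (prod.fst ≫ terminal.from G ≫ e) =
        prod.fst ≫ prod.lift (𝟙 G) (terminal.from G ≫ e) by
      rw [prod.comp_lift, Category.comp_id]]
    rw [Category.assoc, hunitR, Category.comp_id]
  refine ⟨⟨prod.lift p' s, ψ, ?_, ?_⟩⟩
  · -- hom_inv_id
    rw [hψ, prod.comp_lift_assoc, prod.lift_fst_assoc, prod.lift_snd_assoc, hs1,
      hassocT, ← Category.assoc p' i, hzmul]
    have hx : prod.lift p' (p' ≫ i) ≫ m = p' ≫ terminal.from G ≫ e := by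
      rw [show prod.lift p' (p' ≫ i) = p' ≫ prod.lift (𝟙 G) i by
        rw [prod.comp_lift, Category.comp_id], Category.assoc, hinvR]
    rw [reassoc_of% hx, ← Category.assoc p' (terminal.from G)]
    exact hunitTL _ _
  · -- inv_hom_id
    apply Limits.prod.hom_ext
    · rw [Category.assoc, prod.lift_fst, Category.id_comp]
      exact hψp
    · rw [Category.assoc, prod.lift_snd, Category.id_comp]
      apply hTe.hom_ext
      · rw [Category.assoc, hs1,
          prod.comp_lift_assoc ψ (p' ≫ i ≫ z') (𝟙 (T.obj G)), Category.comp_id,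
          ← Category.assoc ψ p', hψp]
        rw [hψ, hassocT, ← Category.assoc prod.fst i z', hzmul]
        have hx : prod.lift (prod.fst ≫ i) (prod.fst : G ⨯ TeG ⟶ G) ≫ m =
            prod.fst ≫ terminal.from G ≫ e := by
          rw [show prod.lift (prod.fst ≫ i) (prod.fst : G ⨯ TeG ⟶ G) =
              prod.fst ≫ prod.lift i (𝟙 G) by
            rw [prod.comp_lift, Category.comp_id], Category.assoc, hinvL]
        rw [reassoc_of% hx, ← Category.assoc prod.fst (terminal.from G)]
        exact hunitTL _ _
      · exact terminalIsTerminal.hom_ext _ _
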